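/- For every integer n ≥ 3, the 2-uniform word obtained by concatenating the blocks v_{i+1} v_i for i = 1, 2, …, n (indices taken modulo n), i.e., the word v_2 v_1 v_3 v_2 ⋯ v_n v_{n-1} v_1 v_n, word-represents (0-11-represents) the cycle C_n on vertex set {v_1,…,v_n}, whose edges are v_i v_{i+1} for all i (indices modulo n). -/

import Mathlib

/-- The subsequence of `w` consisting of all occurrences of `x` and `y`. -/
def restrictWord {V : Type*} [DecidableEq V] (w : List V) (x y : V) : List V :=
  w.filter (fun z => decide (z = x ∨ z = y))

/-- The number of occurrences of the consecutive pattern 11 in a word: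
the number of indices `i` such that the `i`-th and `(i+1)`-th letters are equal. -/
def pattern11Count {V : Type*} [DecidableEq V] (l : List V) : ℕ :=
  ((l.zip l.tail).filter (fun p => decide (p.1 = p.2))).length

/-- A word `w` over `V` `k`-11-represents the simple graph `G` if every vertex occurs in `w`
and, for all distinct `x y`, `xy` is an edge iff `w|_{x,y}` has at most `k` occurrences of
the pattern 11. -/
def Represents {V : Type*} [DecidableEq V] (k : ℕ) (w : List V) (G : SimpleGraph V) : Prop :=
  (∀ v : V, v ∈ w) ∧
  ∀ x y : V, x ≠ y → (G.Adj x y ↔ pattern11Count (restrictWord w x y) ≤ k)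

/-- A graph is `k`-11-representable if some word `k`-11-represents it. -/
def Representable {V : Type*} [DecidableEq V] (k : ℕ) (G : SimpleGraph V) : Prop :=
  ∃ w : List V, Represents k w G

/-- A word that is a permutation of the vertex set: each vertex occurs exactly once. -/
def IsPermWord {V : Type*} (p : List V) : Prop :=
  p.Nodup ∧ ∀ v : V, v ∈ p

/-- A graph is permutationally `k`-11-representable if some concatenation of permutations
of the vertex set `k`-11-represents it. -/
def PermRepresentable {V : Type*} [DecidableEq V] (k : ℕ) (G : SimpleGraph V) : Prop :=
  ∃ ps : List (List V), (∀ p ∈ ps, IsPermWord p) ∧ Represents k ps.flatten G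

/-- The cyclic successor on `Fin n`: `i ↦ i + 1 (mod n)`. -/
def finSucc {n : ℕ} (i : Fin n) : Fin n := ⟨((i : ℕ) + 1) % n, Nat.mod_lt _ i.pos⟩

/-- The cycle `C_n` on vertex set `Fin n` (vertex `i` is `v_{i+1}`), with edges
`v_i v_{i+1}` for all `i`, indices mod `n`. -/
def cycleGraphModN (n : ℕ) : SimpleGraph (Fin n) :=
  SimpleGraph.fromRel (fun i j => (j : ℕ) = ((i : ℕ) + 1) % n)

/-- The 2-uniform word `v_2 v_1 v_3 v_2 ⋯ v_n v_{n-1} v_1 v_n`, the concatenation of the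
blocks `v_{i+1} v_i` over `i` (indices mod `n`). -/
def cycleWord (n : ℕ) : List (Fin n) :=
  (List.finRange n).flatMap (fun i => [finSucc i, i])


open List

lemma pattern11Count_cons_cons {V : Type*} [DecidableEq V] (a b : V) (l : List V) :
    pattern11Count (a :: b :: l) = (if a = b then 1 else 0) + pattern11Count (b :: l) := by
  simp only [pattern11Count, List.tail_cons, List.zip_cons_cons, List.filter_cons]
  by_cases h : a = b <;> simp [h, Nat.add_comm]

lemma flatMap_filter_support {α β : Type*} (g : α → List β) (q : α → Bool)
    (l : List α) (h : ∀ i ∈ l, ¬ q i → g i = []) :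
    l.flatMap g = (l.filter q).flatMap g := by
  induction l with
  | nil => rfl
  | cons a l ih =>
    by_cases hq : q a
    · simp [List.filter_cons, hq, ih (fun i hi => h i (mem_cons_of_mem a hi))]
    · simp [List.filter_cons, hq, ih (fun i hi => h i (mem_cons_of_mem a hi)),
        h a mem_cons_self hq]

lemma filter_finRange_eq {n : ℕ} (S : List (Fin n)) (hS : S.Pairwise (· < ·)) :
    (finRange n).filter (fun i => decide (i ∈ S)) = S := by
  refine (fun hp h1 h2 => List.Perm.eq_of_pairwise (le := (· < ·))
    (fun _ _ _ _ h3 h4 => absurd (h3.trans h4) (lt_irrefl _)) h1 h2 hp) ?_ ?_ ?_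
  · rw [List.perm_ext_iff_of_nodup ((List.nodup_finRange n).filter _) hS.nodup]
    intro a
    simp [List.mem_filter]
  · exact (List.pairwise_lt_finRange n).filter _
  · exact hS

lemma flatMap_finRange_support {n : ℕ} {β : Type*} (g : Fin n → List β) (S : List (Fin n))
    (hS : S.Pairwise (· < ·)) (h : ∀ i, i ∉ S → g i = []) :
    (finRange n).flatMap g = S.flatMap g := by
  rw [flatMap_filter_support g (fun i => decide (i ∈ S)) _
    (fun i _ hi => h i (by simpa using hi)), filter_finRange_eq S hS]

lemma succ_mod (n k : ℕ) (hk : k + 1 ≤ n) : (k+1) % n = if k+1 = n then 0 else k+1 := by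
  split_ifs with h
  · simp [h]
  · exact Nat.mod_eq_of_lt (by omega)

lemma filter_flatMap' {α β : Type*} (l : List α) (g : α → List β) (p : β → Bool) :
    (l.flatMap g).filter p = l.flatMap (fun a => (g a).filter p) := by
  induction l with
  | nil => rfl
  | cons a l ih => simp [List.flatMap_cons, List.filter_append, ih]

lemma block_eval {n : ℕ} (x y : Fin n) (k : ℕ) (hk : k < n) :
    List.filter (fun z => decide (z = x ∨ z = y)) [finSucc ⟨k, hk⟩, (⟨k, hk⟩ : Fin n)]
      = (if (k+1) % n = (x:ℕ) ∨ (k+1) % n = (y:ℕ)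
          then [(⟨(k+1) % n, Nat.mod_lt _ (by omega)⟩ : Fin n)] else [])
        ++ (if k = (x:ℕ) ∨ k = (y:ℕ) then [(⟨k, hk⟩ : Fin n)] else []) := by
  simp only [finSucc, List.filter_cons, List.filter_nil, decide_eq_true_eq, Fin.ext_iff,
    Fin.val_mk]
  split_ifs <;> simp_all

lemma restrict_cycleWord {n : ℕ} (x y : Fin n) :
    restrictWord (cycleWord n) x y
      = (List.finRange n).flatMap
          (fun i => List.filter (fun z => decide (z = x ∨ z = y)) [finSucc i, i]) := by
  rw [restrictWord, cycleWord, filter_flatMap']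

lemma pattern11Count_single {V : Type*} [DecidableEq V] (a : V) :
    pattern11Count [a] = 0 := by simp [pattern11Count]

lemma main_iff {n : ℕ} (hn : 3 ≤ n) (x y : Fin n) (hlt : (x:ℕ) < (y:ℕ)) :
    (cycleGraphModN n).Adj x y ↔ pattern11Count (restrictWord (cycleWord n) x y) = 0 := by
  have hyn : (y:ℕ) < n := y.isLt
  have hxn : (x:ℕ) < n := x.isLt
  by_cases hb : (y:ℕ) = (x:ℕ) + 1
  · -- adjacent, non-wraparound
    by_cases hx0 : (x:ℕ) = 0
    · -- x = 0, y = 1 : S = [0, 1, n-1]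
      have hw : restrictWord (cycleWord n) x y
          = [(⟨1, by omega⟩ : Fin n), ⟨0, by omega⟩, ⟨1, by omega⟩, ⟨0, by omega⟩] := by
        rw [restrict_cycleWord,
          flatMap_finRange_support _ [⟨0, by omega⟩, ⟨1, by omega⟩, ⟨n-1, by omega⟩]
            (by simp only [List.pairwise_cons, List.mem_cons, List.not_mem_nil, or_false,
              List.mem_singleton, List.Pairwise.nil, forall_eq_or_imp, forall_eq, false_implies,
              implies_true, and_true, Fin.lt_def, Fin.val_mk]; omega) ?_]
        · simp only [List.flatMap_cons, List.flatMap_nil]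
          rw [block_eval x y 0 (by omega), block_eval x y 1 (by omega),
            block_eval x y (n-1) (by omega)]
          simp only [show (0+1) % n = 1 from by rw [Nat.mod_eq_of_lt] <;> omega,
            show (1+1) % n = 2 from by rw [Nat.mod_eq_of_lt] <;> omega,
            show (n-1+1) % n = 0 from by rw [show n-1+1 = n from by omega, Nat.mod_self]]
          have p1 : (1 = (x:ℕ) ∨ 1 = (y:ℕ)) := by omega
          have p0 : (0 = (x:ℕ) ∨ 0 = (y:ℕ)) := by omega
          have n2 : ¬(2 = (x:ℕ) ∨ 2 = (y:ℕ)) := by omega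
          have nn1 : ¬(n-1 = (x:ℕ) ∨ n-1 = (y:ℕ)) := by omega
          simp only [if_pos p1, if_pos p0, if_neg n2, if_neg nn1]
          simp
        · rintro ⟨k, hk⟩ hmem
          simp only [List.mem_cons, List.not_mem_nil, or_false, Fin.mk.injEq] at hmem
          push_neg at hmem
          rw [block_eval x y k hk]
          simp only [succ_mod n k (by omega)]
          split_ifs <;> first | rfl | omega
      rw [hw]
      constructor
      · intro _
        simp only [pattern11Count_cons_cons, Fin.mk.injEq, pattern11Count_single]
        split_ifs <;> (try omega) <;> simp_all
      · intro _
        simp only [cycleGraphModN, SimpleGraph.fromRel_adj]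
        refine ⟨by simp [Fin.ext_iff]; omega, Or.inl ?_⟩
        rw [Nat.mod_eq_of_lt (by omega)]; omega
    · -- x ≥ 1 : S = [x-1, x, x+1]
      have hw : restrictWord (cycleWord n) x y
          = [(⟨(x:ℕ), by omega⟩ : Fin n), ⟨(x:ℕ)+1, by omega⟩, ⟨(x:ℕ), by omega⟩,
             ⟨(x:ℕ)+1, by omega⟩] := by
        rw [restrict_cycleWord,
          flatMap_finRange_support _
            [⟨(x:ℕ)-1, by omega⟩, ⟨(x:ℕ), by omega⟩, ⟨(x:ℕ)+1, by omega⟩]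
            (by simp only [List.pairwise_cons, List.mem_cons, List.not_mem_nil, or_false,
              List.mem_singleton, List.Pairwise.nil, forall_eq_or_imp, forall_eq, false_implies,
              implies_true, and_true, Fin.lt_def, Fin.val_mk]; omega) ?_]
        · simp only [List.flatMap_cons, List.flatMap_nil]
          rw [block_eval x y ((x:ℕ)-1) (by omega), block_eval x y (x:ℕ) (by omega),
            block_eval x y ((x:ℕ)+1) (by omega)]
          have hc : ¬(((x:ℕ)+1+1) % n = (x:ℕ) ∨ ((x:ℕ)+1+1) % n = (y:ℕ)) := by
            rw [succ_mod n ((x:ℕ)+1) (by omega)]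
            split_ifs <;> omega
          simp only [show ((x:ℕ)-1+1) % n = (x:ℕ) from by rw [Nat.mod_eq_of_lt] <;> omega,
            show ((x:ℕ)+1) % n = (x:ℕ)+1 from by rw [Nat.mod_eq_of_lt] <;> omega]
          have pA : ((x:ℕ) = (x:ℕ) ∨ (x:ℕ) = (y:ℕ)) := Or.inl rfl
          have pB : ((x:ℕ)+1 = (x:ℕ) ∨ (x:ℕ)+1 = (y:ℕ)) := by omega
          have nC : ¬((x:ℕ)-1 = (x:ℕ) ∨ (x:ℕ)-1 = (y:ℕ)) := by omega
          simp only [if_pos pA, if_pos pB, if_neg nC, if_neg hc]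
          simp
        · rintro ⟨k, hk⟩ hmem
          simp only [List.mem_cons, List.not_mem_nil, or_false, Fin.mk.injEq] at hmem
          push_neg at hmem
          rw [block_eval x y k hk]
          simp only [succ_mod n k (by omega)]
          split_ifs <;> first | rfl | omega
      rw [hw]
      constructor
      · intro _
        simp only [pattern11Count_cons_cons, Fin.mk.injEq, pattern11Count_single]
        split_ifs <;> (try omega) <;> simp_all
      · intro _
        simp only [cycleGraphModN, SimpleGraph.fromRel_adj]
        refine ⟨by simp [Fin.ext_iff]; omega, Or.inl ?_⟩
        rw [Nat.mod_eq_of_lt (by omega)]; omega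
  · by_cases hwrap : (x:ℕ) = 0 ∧ (y:ℕ) = n - 1
    · -- wraparound edge : S = [0, n-2, n-1]
      obtain ⟨hx0, hyv⟩ := hwrap
      have hw : restrictWord (cycleWord n) x y
          = [(⟨0, by omega⟩ : Fin n), ⟨n-1, by omega⟩, ⟨0, by omega⟩, ⟨n-1, by omega⟩] := by
        rw [restrict_cycleWord,
          flatMap_finRange_support _ [⟨0, by omega⟩, ⟨n-2, by omega⟩, ⟨n-1, by omega⟩]
            (by simp only [List.pairwise_cons, List.mem_cons, List.not_mem_nil, or_false,
              List.mem_singleton, List.Pairwise.nil, forall_eq_or_imp, forall_eq, false_implies,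
              implies_true, and_true, Fin.lt_def, Fin.val_mk]; omega) ?_]
        · simp only [List.flatMap_cons, List.flatMap_nil]
          rw [block_eval x y 0 (by omega), block_eval x y (n-2) (by omega),
            block_eval x y (n-1) (by omega)]
          simp only [show (0+1) % n = 1 from by rw [Nat.mod_eq_of_lt] <;> omega,
            show (n-2+1) % n = n-1 from by rw [Nat.mod_eq_of_lt] <;> omega,
            show (n-1+1) % n = 0 from by rw [show n-1+1 = n from by omega, Nat.mod_self]]
          have n1 : ¬(1 = (x:ℕ) ∨ 1 = (y:ℕ)) := by omega
          have p0 : (0 = (x:ℕ) ∨ 0 = (y:ℕ)) := by omega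
          have pn1 : (n-1 = (x:ℕ) ∨ n-1 = (y:ℕ)) := by omega
          have nn2 : ¬(n-2 = (x:ℕ) ∨ n-2 = (y:ℕ)) := by omega
          simp only [if_neg n1, if_pos p0, if_pos pn1, if_neg nn2]
          simp
        · rintro ⟨k, hk⟩ hmem
          simp only [List.mem_cons, List.not_mem_nil, or_false, Fin.mk.injEq] at hmem
          push_neg at hmem
          rw [block_eval x y k hk]
          simp only [succ_mod n k (by omega)]
          split_ifs <;> first | rfl | omega
      rw [hw]
      constructor
      · intro _
        simp only [pattern11Count_cons_cons, Fin.mk.injEq, pattern11Count_single]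
        split_ifs <;> (try omega) <;> simp_all
      · intro _
        simp only [cycleGraphModN, SimpleGraph.fromRel_adj]
        refine ⟨by simp [Fin.ext_iff]; omega, Or.inr ?_⟩
        rw [show (y:ℕ)+1 = n from by omega, Nat.mod_self]; omega
    · -- non-adjacent
      have hnadj : ¬ (cycleGraphModN n).Adj x y := by
        simp only [cycleGraphModN, SimpleGraph.fromRel_adj, not_and, not_or]
        intro _
        constructor
        · simp only [succ_mod n (x:ℕ) (by omega)]; split_ifs <;> omega
        · simp only [succ_mod n (y:ℕ) (by omega)]; split_ifs <;> omega
      by_cases hx0 : (x:ℕ) = 0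
      · -- S = [0, y-1, y, n-1], word x y y x
        have hyn2 : (y:ℕ) < n - 1 := by
          rcases Nat.lt_or_ge (y:ℕ) (n-1) with h | h
          · exact h
          · exact absurd ⟨hx0, by omega⟩ hwrap
        have hw : restrictWord (cycleWord n) x y
            = [(⟨0, by omega⟩ : Fin n), ⟨(y:ℕ), by omega⟩, ⟨(y:ℕ), by omega⟩,
               ⟨0, by omega⟩] := by
          rw [restrict_cycleWord,
            flatMap_finRange_support _
              [⟨0, by omega⟩, ⟨(y:ℕ)-1, by omega⟩, ⟨(y:ℕ), by omega⟩, ⟨n-1, by omega⟩]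
              (by simp only [List.pairwise_cons, List.mem_cons, List.not_mem_nil, or_false,
              List.mem_singleton, List.Pairwise.nil, forall_eq_or_imp, forall_eq, false_implies,
              implies_true, and_true, Fin.lt_def, Fin.val_mk]; omega) ?_]
          · simp only [List.flatMap_cons, List.flatMap_nil]
            rw [block_eval x y 0 (by omega), block_eval x y ((y:ℕ)-1) (by omega),
              block_eval x y (y:ℕ) (by omega), block_eval x y (n-1) (by omega)]
            simp only [show (0+1) % n = 1 from by rw [Nat.mod_eq_of_lt] <;> omega,
              show ((y:ℕ)-1+1) % n = (y:ℕ) from by rw [Nat.mod_eq_of_lt] <;> omega,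
              show ((y:ℕ)+1) % n = (y:ℕ)+1 from by rw [Nat.mod_eq_of_lt] <;> omega,
              show (n-1+1) % n = 0 from by rw [show n-1+1 = n from by omega, Nat.mod_self]]
            have n1 : ¬(1 = (x:ℕ) ∨ 1 = (y:ℕ)) := by omega
            have p0 : (0 = (x:ℕ) ∨ 0 = (y:ℕ)) := by omega
            have py : ((y:ℕ) = (x:ℕ) ∨ (y:ℕ) = (y:ℕ)) := Or.inr rfl
            have nym : ¬((y:ℕ)-1 = (x:ℕ) ∨ (y:ℕ)-1 = (y:ℕ)) := by omega
            have nyp : ¬((y:ℕ)+1 = (x:ℕ) ∨ (y:ℕ)+1 = (y:ℕ)) := by omega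
            have nn1 : ¬(n-1 = (x:ℕ) ∨ n-1 = (y:ℕ)) := by omega
            simp only [if_neg n1, if_pos p0, if_pos py, if_neg nym, if_neg nyp, if_neg nn1]
            simp
          · rintro ⟨k, hk⟩ hmem
            simp only [List.mem_cons, List.not_mem_nil, or_false, Fin.mk.injEq] at hmem
            push_neg at hmem
            rw [block_eval x y k hk]
            simp only [succ_mod n k (by omega)]
            split_ifs <;> first | rfl | omega
        refine iff_of_false hnadj ?_
        rw [hw]
        simp only [pattern11Count_cons_cons, Fin.mk.injEq, pattern11Count_single]
        split_ifs <;> (try omega) <;> simp_all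
      · -- S = [x-1, x, y-1, y], word x x y y
        have hw : restrictWord (cycleWord n) x y
            = [(⟨(x:ℕ), by omega⟩ : Fin n), ⟨(x:ℕ), by omega⟩, ⟨(y:ℕ), by omega⟩,
               ⟨(y:ℕ), by omega⟩] := by
          rw [restrict_cycleWord,
            flatMap_finRange_support _
              [⟨(x:ℕ)-1, by omega⟩, ⟨(x:ℕ), by omega⟩, ⟨(y:ℕ)-1, by omega⟩,
               ⟨(y:ℕ), by omega⟩]
              (by simp only [List.pairwise_cons, List.mem_cons, List.not_mem_nil, or_false,
              List.mem_singleton, List.Pairwise.nil, forall_eq_or_imp, forall_eq, false_implies,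
              implies_true, and_true, Fin.lt_def, Fin.val_mk]; omega) ?_]
          · simp only [List.flatMap_cons, List.flatMap_nil]
            rw [block_eval x y ((x:ℕ)-1) (by omega), block_eval x y (x:ℕ) (by omega),
              block_eval x y ((y:ℕ)-1) (by omega), block_eval x y (y:ℕ) (by omega)]
            have hc : ¬(((y:ℕ)+1) % n = (x:ℕ) ∨ ((y:ℕ)+1) % n = (y:ℕ)) := by
              rw [succ_mod n (y:ℕ) (by omega)]
              split_ifs <;> omega
            simp only [show ((x:ℕ)-1+1) % n = (x:ℕ) from by rw [Nat.mod_eq_of_lt] <;> omega,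
              show ((x:ℕ)+1) % n = (x:ℕ)+1 from by rw [Nat.mod_eq_of_lt] <;> omega,
              show ((y:ℕ)-1+1) % n = (y:ℕ) from by rw [Nat.mod_eq_of_lt] <;> omega]
            have px : ((x:ℕ) = (x:ℕ) ∨ (x:ℕ) = (y:ℕ)) := Or.inl rfl
            have py : ((y:ℕ) = (x:ℕ) ∨ (y:ℕ) = (y:ℕ)) := Or.inr rfl
            have nxm : ¬((x:ℕ)-1 = (x:ℕ) ∨ (x:ℕ)-1 = (y:ℕ)) := by omega
            have nxp : ¬((x:ℕ)+1 = (x:ℕ) ∨ (x:ℕ)+1 = (y:ℕ)) := by omega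
            have nym : ¬((y:ℕ)-1 = (x:ℕ) ∨ (y:ℕ)-1 = (y:ℕ)) := by omega
            simp only [if_pos px, if_pos py, if_neg nxm, if_neg nxp, if_neg nym, if_neg hc]
            simp
          · rintro ⟨k, hk⟩ hmem
            simp only [List.mem_cons, List.not_mem_nil, or_false, Fin.mk.injEq] at hmem
            push_neg at hmem
            rw [block_eval x y k hk]
            simp only [succ_mod n k (by omega)]
            split_ifs <;> first | rfl | omega
        refine iff_of_false hnadj ?_
        rw [hw]
        simp only [pattern11Count_cons_cons, Fin.mk.injEq, pattern11Count_single]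
        split_ifs <;> (try omega) <;> simp_all

theorem stmt9' : ∀ n : ℕ, 3 ≤ n → Represents 0 (cycleWord n) (cycleGraphModN n) := by
  intro n hn
  constructor
  · intro v
    simp only [cycleWord, List.mem_flatMap]
    exact ⟨v, List.mem_finRange v, by simp⟩
  · intro x y hxy
    have hsym : restrictWord (cycleWord n) x y = restrictWord (cycleWord n) y x := by
      simp only [restrictWord]
      apply List.filter_congr
      intro z _
      exact decide_eq_decide.mpr (by tauto)
    have hne : (x:ℕ) ≠ (y:ℕ) := fun h => hxy (Fin.ext h)
    rcases hne.lt_or_gt with h | h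
    · rw [Nat.le_zero, ← main_iff hn x y h]
    · rw [Nat.le_zero, hsym, ← main_iff hn y x h, SimpleGraph.adj_comm]

/-- for every `n ≥ 3`, the word obtained by concatenating the blocks
`v_{i+1} v_i` word-represents (0-11-represents) the cycle `C_n`. -/
theorem stmt9 : ∀ n : ℕ, 3 ≤ n → Represents 0 (cycleWord n) (cycleGraphModN n) := by
  exact stmt9'
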